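/- Let Γ(x,y) = A(x,y)/B(x,y) where B(x,y) = (1 − 4xy^2)(1 − 4y − 12xy^2)(1 − 2y − 12xy^2). Then for every real x > 0, the root r(x) = 1/(2(1 + √(1+3x))) of the factor 1 − 4y − 12xy^2 = 0 satisfies: r(x) is a root of B(x,·), and r(x) has strictly smaller absolute value than every other root of B(x,·), namely the roots y = ±1/(2√x) and y = (±√(1+12x) − 1)/(12x) and the other root of 1 − 4y − 12xy^2. -/
import Mathlib


/-- For each `x > 0`, the root `r(x) = 1/(2(1+√(1+3x)))` of `1 - 4y - 12xy² = 0` is a root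
of `B(x,·) = (1-4xy²)(1-4y-12xy²)(1-2y-12xy²)` and has strictly smaller absolute value than
every other root of `B(x,·)`. -/
theorem stmt_10 (x : ℝ) (hx : 0 < x) (r : ℝ)
    (hr : r = 1 / (2 * (1 + Real.sqrt (1 + 3 * x)))) :
    (1 - 4 * r - 12 * x * r ^ 2 = 0) ∧
    (1 - 4 * x * r ^ 2) * (1 - 4 * r - 12 * x * r ^ 2) * (1 - 2 * r - 12 * x * r ^ 2) = 0 ∧
    ∀ y : ℝ,
      (y = 1 / (2 * Real.sqrt x) ∨ y = -(1 / (2 * Real.sqrt x)) ∨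
        y = (Real.sqrt (1 + 12 * x) - 1) / (12 * x) ∨
        y = (-Real.sqrt (1 + 12 * x) - 1) / (12 * x) ∨
        (1 - 4 * y - 12 * x * y ^ 2 = 0 ∧ y ≠ r)) →
      |r| < |y| := by
  set s := Real.sqrt (1 + 3 * x) with hsdef
  have hs2 : s ^ 2 = 1 + 3 * x := Real.sq_sqrt (by linarith)
  have hs0 : 0 ≤ s := Real.sqrt_nonneg _
  have hs1 : 1 < s := by nlinarith
  have hrpos : 0 < r := by
    rw [hr]; exact div_pos one_pos (by linarith)
  have h1 : 1 - 4 * r - 12 * x * r ^ 2 = 0 := by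
    rw [hr]
    have hd : (2 * (1 + s)) ≠ 0 := by positivity
    field_simp
    nlinarith
  refine ⟨h1, by linear_combination ((1 - 4*x*r^2) * (1 - 2*r - 12*x*r^2)) * h1, ?_⟩
  intro y hy
  set u := Real.sqrt x with hudef
  have hu2 : u ^ 2 = x := Real.sq_sqrt hx.le
  have hu0 : 0 < u := Real.sqrt_pos.mpr hx
  set t := Real.sqrt (1 + 12 * x) with htdef
  have ht2 : t ^ 2 = 1 + 12 * x := Real.sq_sqrt (by linarith)
  have ht0 : 0 ≤ t := Real.sqrt_nonneg _
  have ht1 : 1 < t := by nlinarith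
  have hts : t < 1 + 2 * s :=
    lt_of_pow_lt_pow_left₀ 2 (by linarith) (by nlinarith)
  have hra : |r| = r := abs_of_pos hrpos
  rcases hy with hy | hy | hy | hy | ⟨hy, hne⟩
  · -- y = 1/(2u)
    have hypos : 0 < (1 : ℝ) / (2 * u) := by positivity
    rw [hra, hy, abs_of_pos hypos, hr]
    apply one_div_lt_one_div_of_lt (by positivity)
    nlinarith
  · have hypos : 0 < (1 : ℝ) / (2 * u) := by positivity
    rw [hra, hy, abs_neg, abs_of_pos hypos, hr]
    apply one_div_lt_one_div_of_lt (by positivity)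
    nlinarith
  · -- y = (t-1)/(12x)
    have hypos : 0 < (t - 1) / (12 * x) := div_pos (by linarith) (by linarith)
    rw [hra, hy, abs_of_pos hypos, hr, div_lt_div_iff₀ (by positivity) (by linarith)]
    nlinarith [mul_pos (by linarith : (0:ℝ) < t - 1) (by linarith : (0:ℝ) < 1 + 2*s - t)]
  · -- y = (-t-1)/(12x)
    have hyneg : (-t - 1) / (12 * x) < 0 := div_neg_of_neg_of_pos (by linarith) (by linarith)
    rw [hra, hy, abs_of_neg hyneg, hr,
      show -((-t - 1) / (12 * x)) = (t + 1) / (12 * x) by ring,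
      div_lt_div_iff₀ (by positivity) (by linarith)]
    nlinarith [mul_pos (by linarith : (0:ℝ) < t + 1) (by linarith : (0:ℝ) < 2 + 2*s - (t - 1))]
  · -- other root of the quadratic
    have hfac : (r - y) * (4 + 12 * x * (r + y)) = 0 := by linear_combination hy - h1
    rcases mul_eq_zero.mp hfac with h | h
    · exact absurd (by linarith) hne
    · have hry : r + y < 0 := by nlinarith
      have hyneg : y < 0 := by linarith
      rw [hra, abs_of_neg hyneg]
      linarith
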